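/- Let m, n ≥ 3. Every boundary vertex of the grid graph P_m □ P_n has nonnegative node resistance curvature: p_{(i,j)} ≥ 0 whenever i ∈ {1,m} or j ∈ {1,n}. -/

import Mathlib

open Classical Matrix

/-- The four Penrose conditions characterizing the Moore–Penrose pseudoinverse
of a real square matrix. -/
def IsMoorePenroseInverse {V : Type*} [Fintype V] [DecidableEq V]
    (L P : Matrix V V ℝ) : Prop :=
  L * P * L = L ∧ P * L * P = P ∧ (L * P)ᵀ = L * P ∧ (P * L)ᵀ = P * L

/-- The Moore–Penrose pseudoinverse of a real square matrix. -/
noncomputable def pinv {V : Type*} [Fintype V] [DecidableEq V]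
    (L : Matrix V V ℝ) : Matrix V V ℝ :=
  if h : ∃ P, IsMoorePenroseInverse L P then h.choose else 0

/-- Effective resistance between `x` and `y` computed from a (weighted) Laplacian `L`. -/
noncomputable def effResM {V : Type*} [Fintype V] [DecidableEq V]
    (L : Matrix V V ℝ) (x y : V) : ℝ :=
  pinv L x x + pinv L y y - 2 * pinv L x y

/-- Effective resistance between vertices `x` and `y` of a simple graph `G`. -/
noncomputable def effRes {V : Type*} [Fintype V] [DecidableEq V]
    (G : SimpleGraph V) (x y : V) : ℝ :=
  effResM (G.lapMatrix ℝ) x y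

/-- The node resistance curvature `p_x = 1 - (1/2) ∑_{y ~ x} ω_{x,y}`. -/
noncomputable def curv {V : Type*} [Fintype V] [DecidableEq V]
    (G : SimpleGraph V) (x : V) : ℝ :=
  1 - (1/2) * ∑ y : V, if G.Adj x y then effRes G x y else 0

/-- The grid graph `P_m □ P_n` (vertex `(i,j)` of the paper corresponds to
`(⟨i-1⟩, ⟨j-1⟩) : Fin m × Fin n`). -/
def grid (m n : ℕ) : SimpleGraph (Fin m × Fin n) :=
  (SimpleGraph.pathGraph m).boxProd (SimpleGraph.pathGraph n)

set_option linter.unusedSectionVars false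
set_option maxHeartbeats 1000000
section AUX

section core
variable {V : Type*} [Fintype V] [DecidableEq V]

lemma mp_unique {L P Q : Matrix V V ℝ}
    (hP : IsMoorePenroseInverse L P) (hQ : IsMoorePenroseInverse L Q) : P = Q := by
  obtain ⟨hP1, hP2, hP3, hP4⟩ := hP
  obtain ⟨hQ1, hQ2, hQ3, hQ4⟩ := hQ
  have hLP : L * P = L * Q := by
    calc L * P = (L * P)ᵀ := hP3.symm
    _ = Pᵀ * Lᵀ := by rw [transpose_mul]
    _ = Pᵀ * (L * Q * L)ᵀ := by rw [hQ1]
    _ = Pᵀ * (Lᵀ * (L * Q)ᵀ) := by rw [show (L * Q * L)ᵀ = Lᵀ * (L*Q)ᵀ by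
          rw [transpose_mul]]
    _ = (Pᵀ * Lᵀ) * (L * Q) := by rw [hQ3, mul_assoc]
    _ = (L * P)ᵀ * (L * Q) := by rw [transpose_mul]
    _ = (L * P) * (L * Q) := by rw [hP3]
    _ = (L * P * L) * Q := by simp only [mul_assoc]
    _ = L * Q := by rw [hP1]
  have hPL : P * L = Q * L := by
    calc P * L = P * (L * Q * L) := by rw [hQ1]
    _ = (P * L) * (Q * L) := by simp only [mul_assoc]
    _ = (P * L)ᵀ * (Q * L)ᵀ := by rw [hP4, hQ4]
    _ = ((Q * L) * (P * L))ᵀ := by rw [transpose_mul (Q*L) (P*L)]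
    _ = (Q * (L * P * L))ᵀ := by simp only [mul_assoc]
    _ = (Q * L)ᵀ := by rw [hP1]
    _ = Q * L := hQ4
  calc P = P * L * P := hP2.symm
  _ = P * (L * Q) := by rw [mul_assoc, hLP]
  _ = (Q * L) * Q := by rw [← mul_assoc, hPL]
  _ = Q := by rw [mul_assoc, ← mul_assoc, hQ2]

lemma pinv_eq_of {L P : Matrix V V ℝ} (h : IsMoorePenroseInverse L P) : pinv L = P := by
  have hex : ∃ Q, IsMoorePenroseInverse L Q := ⟨P, h⟩
  rw [pinv, dif_pos hex]
  exact mp_unique hex.choose_spec h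

variable (G : SimpleGraph V)

private noncomputable def QQ (V : Type*) [Fintype V] : Matrix V V ℝ :=
  Matrix.of fun _ _ => (Fintype.card V : ℝ)⁻¹

lemma lap_rowsum (i : V) : ∑ j, G.lapMatrix ℝ i j = 0 := by
  have h := congrFun (G.lapMatrix_mulVec_const_eq_zero (R := ℝ)) i
  simpa [Matrix.mulVec, dotProduct] using h

lemma lap_colsum (j : V) : ∑ i, G.lapMatrix ℝ i j = 0 := by
  have hs : ∀ i, G.lapMatrix ℝ i j = G.lapMatrix ℝ j i := by
    intro i
    exact congrFun (congrFun (G.isSymm_lapMatrix (R := ℝ)).symm i) j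
  rw [Finset.sum_congr rfl fun i _ => hs i]
  exact lap_rowsum G j

lemma lap_mul_QQ : G.lapMatrix ℝ * QQ V = 0 := by
  ext i j
  simp only [Matrix.mul_apply, QQ, Matrix.of_apply, Matrix.zero_apply]
  rw [← Finset.sum_mul, lap_rowsum, zero_mul]

lemma QQ_mul_lap : QQ V * G.lapMatrix ℝ = 0 := by
  ext i j
  simp only [Matrix.mul_apply, QQ, Matrix.of_apply, Matrix.zero_apply]
  rw [← Finset.mul_sum, lap_colsum, mul_zero]

lemma QQ_mul_QQ [Nonempty V] : QQ V * QQ V = QQ V := by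
  have hc : (0:ℝ) < (Fintype.card V : ℝ) := by
    exact_mod_cast Fintype.card_pos
  ext i j
  simp only [Matrix.mul_apply, QQ, Matrix.of_apply]
  rw [Finset.sum_const, Finset.card_univ, nsmul_eq_mul]
  field_simp

lemma QQ_transpose : (QQ V)ᵀ = QQ V := by ext i j; rfl

end core

section construct
variable {V : Type*} [Fintype V] [DecidableEq V] (G : SimpleGraph V)

set_option linter.unusedSectionVars false

lemma quad_QQ (x : V → ℝ) :
    x ⬝ᵥ (QQ V *ᵥ x) = (Fintype.card V : ℝ)⁻¹ * (∑ i, x i) ^ 2 := by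
  simp only [Matrix.mulVec, dotProduct, QQ, Matrix.of_apply]
  rw [← Finset.sum_mul, ← Finset.mul_sum]
  ring

lemma lapPD (hG : G.Connected) : (G.lapMatrix ℝ + QQ V).PosDef := by
  have hne : Nonempty V := hG.nonempty
  have hcpos : (0:ℝ) < (Fintype.card V : ℝ) := by exact_mod_cast Fintype.card_pos
  rw [Matrix.posDef_iff_dotProduct_mulVec]
  constructor
  · rw [Matrix.IsHermitian, conjTranspose_eq_transpose_of_trivial, transpose_add,
      QQ_transpose, (G.isSymm_lapMatrix (R := ℝ))]
  · intro x hx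
    have hsx : star x = x := by funext i; simp
    rw [hsx, add_mulVec, dotProduct_add, quad_QQ]
    have h1 : 0 ≤ x ⬝ᵥ (G.lapMatrix ℝ *ᵥ x) := by
      have := (Matrix.posSemidef_iff_dotProduct_mulVec.mp (G.posSemidef_lapMatrix ℝ)).2 x
      simpa [hsx] using this
    by_cases hz : x ⬝ᵥ (G.lapMatrix ℝ *ᵥ x) = 0
    · have hconst : ∀ i j : V, x i = x j := by
        have h3 := (G.lapMatrix_toLinearMap₂'_apply'_eq_zero_iff_forall_reachable x).mp
          (by rw [Matrix.toLinearMap₂'_apply']; exact hz)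
        exact fun i j => h3 i j (hG.preconnected i j)
      obtain ⟨i0⟩ := hne
      have hx0 : x i0 ≠ 0 := by
        intro h0
        exact hx (funext fun j => by rw [hconst j i0, h0]; rfl)
      have hsum : ∑ i, x i = (Fintype.card V : ℝ) * x i0 := by
        rw [Finset.sum_congr rfl fun i _ => hconst i i0, Finset.sum_const,
          Finset.card_univ, nsmul_eq_mul]
      rw [hz, zero_add, hsum]
      have : (Fintype.card V : ℝ) * x i0 ≠ 0 := mul_ne_zero (ne_of_gt hcpos) hx0
      positivity
    · have h2 : 0 < x ⬝ᵥ (G.lapMatrix ℝ *ᵥ x) := lt_of_le_of_ne h1 (Ne.symm hz)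
      have h4 : 0 ≤ (Fintype.card V : ℝ)⁻¹ * (∑ i, x i) ^ 2 := by positivity
      linarith

lemma lap_mp (hG : G.Connected) :
    IsMoorePenroseInverse (G.lapMatrix ℝ) ((G.lapMatrix ℝ + QQ V)⁻¹ - QQ V) ∧
      ((G.lapMatrix ℝ + QQ V)⁻¹ - QQ V)ᵀ = (G.lapMatrix ℝ + QQ V)⁻¹ - QQ V := by
  have hne : Nonempty V := hG.nonempty
  set L := G.lapMatrix ℝ with hLdef
  set M := L + QQ V with hMdef
  set P := M⁻¹ - QQ V with hPdef
  have hPD : M.PosDef := lapPD G hG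
  have hdet : IsUnit M.det := M.isUnit_iff_isUnit_det.mp hPD.isUnit
  have hMM : M * M⁻¹ = 1 := mul_nonsing_inv _ hdet
  have hMM' : M⁻¹ * M = 1 := nonsing_inv_mul _ hdet
  have hMQ : M * QQ V = QQ V := by
    rw [hMdef, add_mul, lap_mul_QQ, QQ_mul_QQ, zero_add]
  have hQM : QQ V * M = QQ V := by
    rw [hMdef, mul_add, QQ_mul_lap, QQ_mul_QQ, zero_add]
  have hIQ : M⁻¹ * QQ V = QQ V := by
    conv_lhs => rw [← hMQ, ← mul_assoc, hMM', one_mul]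
  have hQI : QQ V * M⁻¹ = QQ V := by
    conv_lhs => rw [← hQM, mul_assoc, hMM, mul_one]
  have hLM : L = M - QQ V := by rw [hMdef, add_sub_cancel_right]
  have hLP : L * P = 1 - QQ V := by
    rw [hLM, hPdef, sub_mul, mul_sub, mul_sub, hMM, hMQ, hQI, QQ_mul_QQ, sub_self, sub_zero]
  have hPL : P * L = 1 - QQ V := by
    rw [hLM, hPdef, sub_mul, mul_sub, mul_sub, hMM', hIQ, hQM, QQ_mul_QQ, sub_self, sub_zero]
  have hQQt : (QQ V)ᵀ = QQ V := QQ_transpose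
  have hMt : Mᵀ = M := by
    rw [hMdef, transpose_add, hQQt, (G.isSymm_lapMatrix (R := ℝ))]
  refine ⟨⟨?_, ?_, ?_, ?_⟩, ?_⟩
  · rw [hLP, sub_mul, one_mul, QQ_mul_lap, sub_zero]
  · have hQP : QQ V * P = 0 := by
      rw [hPdef, mul_sub, hQI, QQ_mul_QQ, sub_self]
    rw [hPL, sub_mul, one_mul, hQP, sub_zero]
  · rw [hLP, transpose_sub, transpose_one, hQQt]
  · rw [hPL, transpose_sub, transpose_one, hQQt]
  · rw [hPdef, transpose_sub, hQQt, transpose_nonsing_inv, hMt]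

end construct

theorem flow_bound {V : Type*} [Fintype V] [DecidableEq V] (G : SimpleGraph V)
    (hG : G.Connected) (x y : V) (θ : V → V → ℝ)
    (hanti : ∀ u v, θ u v = - θ v u)
    (hsupp : ∀ u v, ¬ G.Adj u v → θ u v = 0)
    (hdiv : ∀ u, ∑ v, θ u v = (if u = x then (1:ℝ) else 0) - (if u = y then 1 else 0)) :
    effRes G x y ≤ (1/2) * ∑ u, ∑ v, (θ u v)^2 := by
  set L := G.lapMatrix ℝ with hLdef
  obtain ⟨hMP, hsym⟩ : IsMoorePenroseInverse L (pinv L) ∧ (pinv L)ᵀ = pinv L := by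
    have h := lap_mp G hG
    rw [pinv_eq_of h.1]
    exact h
  set P := pinv L with hPdef
  set b : V → ℝ := fun u => (if u = x then (1:ℝ) else 0) - (if u = y then 1 else 0) with hbdef
  set g : V → ℝ := P *ᵥ b with hgdef
  have hPsymm : ∀ u v, P u v = P v u := by
    intro u v
    have := congrFun (congrFun hsym v) u
    simpa [Matrix.transpose_apply] using this
  have hPb : ∀ u, g u = P u x - P u y := by
    intro u
    simp only [hgdef, Matrix.mulVec, dotProduct, hbdef, mul_sub, mul_ite, mul_one,
      mul_zero, Finset.sum_sub_distrib, Finset.sum_ite_eq', Finset.mem_univ, if_true]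
  set ω : ℝ := P x x + P y y - 2 * P x y with hωdef
  have heff : effRes G x y = ω := by
    simp only [effRes, effResM, hωdef, hPdef, hLdef]
  have hbg : ∑ u, b u * g u = ω := by
    simp only [hbdef, sub_mul, ite_mul, one_mul, zero_mul, Finset.sum_sub_distrib,
      Finset.sum_ite_eq', Finset.mem_univ, if_true]
    rw [hPb x, hPb y, hωdef, hPsymm y x]
    ring
  have hLg : L *ᵥ g = (L * P) *ᵥ b := by rw [hgdef, mulVec_mulVec]
  have hgLg : g ⬝ᵥ (L *ᵥ g) = ω := by
    rw [hLg, hgdef]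
    calc (P *ᵥ b) ⬝ᵥ ((L * P) *ᵥ b) = ((L * P) *ᵥ b) ⬝ᵥ (P *ᵥ b) := dotProduct_comm _ _
    _ = (((L * P) *ᵥ b) ᵥ* P) ⬝ᵥ b := by rw [dotProduct_mulVec]
    _ = (Pᵀ *ᵥ ((L * P) *ᵥ b)) ⬝ᵥ b := by rw [← mulVec_transpose]
    _ = ((Pᵀ * (L * P)) *ᵥ b) ⬝ᵥ b := by rw [mulVec_mulVec]
    _ = (P *ᵥ b) ⬝ᵥ b := by rw [hsym, ← mul_assoc, hMP.2.1]
    _ = b ⬝ᵥ (P *ᵥ b) := dotProduct_comm _ _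
    _ = ∑ u, b u * g u := by rw [hgdef]; rfl
    _ = ω := hbg
  -- the discrete gradient on edges
  set dd : V → V → ℝ := fun u v => if G.Adj u v then g u - g v else 0 with hdddef
  have hS : ∑ u, ∑ v, θ u v * g u = ω := by
    rw [← hbg]
    refine Finset.sum_congr rfl fun u _ => ?_
    rw [← Finset.sum_mul, hdiv u]
  have hT : ∑ u, ∑ v, θ u v * g v = -ω := by
    have h1 : ∑ u, ∑ v, θ u v * g v = ∑ v, ∑ u, θ u v * g v := Finset.sum_comm
    rw [h1]
    have h2 : ∀ v u, θ u v * g v = -(θ v u * g v) := by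
      intro v u
      rw [hanti u v]
      ring
    calc ∑ v, ∑ u, θ u v * g v = ∑ v, ∑ u, -(θ v u * g v) := by
          refine Finset.sum_congr rfl fun v _ => Finset.sum_congr rfl fun u _ => h2 v u
    _ = -∑ v, ∑ u, θ v u * g v := by simp [Finset.sum_neg_distrib]
    _ = -ω := by rw [← hS]
  have hpair : ∑ u, ∑ v, θ u v * dd u v = 2 * ω := by
    have : ∀ u v, θ u v * dd u v = θ u v * g u - θ u v * g v := by
      intro u v
      by_cases h : G.Adj u v
      · simp only [hdddef, if_pos h]
        ring
      · rw [hsupp u v h]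
        ring
    calc ∑ u, ∑ v, θ u v * dd u v = ∑ u, ∑ v, (θ u v * g u - θ u v * g v) := by
          refine Finset.sum_congr rfl fun u _ => Finset.sum_congr rfl fun v _ => this u v
    _ = (∑ u, ∑ v, θ u v * g u) - ∑ u, ∑ v, θ u v * g v := by
          simp [Finset.sum_sub_distrib]
    _ = ω - (-ω) := by rw [hS, hT]
    _ = 2 * ω := by ring
  have hdd2 : ∑ u, ∑ v, (dd u v)^2 = 2 * ω := by
    have h1 := G.lapMatrix_toLinearMap₂' (R := ℝ) g
    rw [Matrix.toLinearMap₂'_apply'] at h1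
    have h2 : ∀ u v : V, (dd u v)^2 = if G.Adj u v then (g u - g v)^2 else 0 := by
      intro u v
      by_cases h : G.Adj u v <;> simp [hdddef, h]
    calc ∑ u, ∑ v, (dd u v)^2 = ∑ u, ∑ v, if G.Adj u v then (g u - g v)^2 else 0 := by
          refine Finset.sum_congr rfl fun u _ => Finset.sum_congr rfl fun v _ => h2 u v
    _ = 2 * ω := by rw [hgLg] at h1; linarith
  -- Cauchy-Schwarz
  have hCS := Finset.sum_mul_sq_le_sq_mul_sq Finset.univ (fun p : V × V => θ p.1 p.2)
    (fun p : V × V => dd p.1 p.2)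
  simp only [Fintype.sum_prod_type] at hCS
  rw [hpair, hdd2] at hCS
  have hE : 0 ≤ ∑ u, ∑ v, (θ u v)^2 := by positivity
  rw [heff]
  rcases le_or_gt ω 0 with h | h
  · linarith
  · nlinarith [hCS]


theorem adj_effRes_le_one {V : Type*} [Fintype V] [DecidableEq V] (G : SimpleGraph V)
    (hG : G.Connected) {x y : V} (hxy : G.Adj x y) : effRes G x y ≤ 1 := by
  have hne : x ≠ y := hxy.ne
  set θ : V → V → ℝ := fun u v =>
    if u = x ∧ v = y then 1 else if u = y ∧ v = x then -1 else 0 with hθdef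
  have hbound := flow_bound G hG x y θ ?_ ?_ ?_
  · have hsq : ∀ u v, (θ u v)^2 = (if u = x then (if v = y then (1:ℝ) else 0) else 0)
        + (if u = y then (if v = x then (1:ℝ) else 0) else 0) := by
      intro u v
      simp only [hθdef]
      by_cases h1 : u = x <;> by_cases h2 : v = y <;> by_cases h3 : u = y <;>
        by_cases h4 : v = x <;> simp_all <;> norm_num
    have heq : (1/2 : ℝ) * ∑ u, ∑ v, (θ u v)^2 = 1 := by
      have h1 : ∀ u : V, ∑ v, (if u = x then (if v = y then (1:ℝ) else 0) else 0)
          = if u = x then 1 else 0 := by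
        intro u; by_cases h : u = x <;> simp [h, Finset.sum_ite_eq']
      have h2 : ∀ u : V, ∑ v, (if u = y then (if v = x then (1:ℝ) else 0) else 0)
          = if u = y then 1 else 0 := by
        intro u; by_cases h : u = y <;> simp [h, Finset.sum_ite_eq']
      rw [Finset.sum_congr rfl fun u (_ : u ∈ Finset.univ) => by
        rw [Finset.sum_congr rfl fun v (_ : v ∈ Finset.univ) => hsq u v,
          Finset.sum_add_distrib, h1 u, h2 u]]
      rw [Finset.sum_add_distrib]
      simp [Finset.sum_ite_eq']
      norm_num
    linarith
  · intro u v
    simp only [hθdef]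
    by_cases h1 : u = x <;> by_cases h2 : v = y <;> by_cases h3 : u = y <;>
      by_cases h4 : v = x <;> simp_all <;> norm_num
  · intro u v hnadj
    simp only [hθdef]
    rw [if_neg, if_neg]
    · rintro ⟨rfl, rfl⟩
      exact hnadj hxy.symm
    · rintro ⟨rfl, rfl⟩
      exact hnadj hxy
  · intro u
    by_cases h1 : u = x
    · subst h1
      have : ∀ v, θ u v = if v = y then (1:ℝ) else 0 := by
        intro v
        simp only [hθdef]
        by_cases h2 : v = y <;> simp_all
      rw [Finset.sum_congr rfl fun v _ => this v]
      simp [Finset.sum_ite_eq', hne]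
    · by_cases h2 : u = y
      · subst h2
        have : ∀ v, θ u v = if v = x then (-1:ℝ) else 0 := by
          intro v
          simp only [hθdef]
          by_cases h3 : v = x <;> simp_all
        rw [Finset.sum_congr rfl fun v _ => this v]
        simp [Finset.sum_ite_eq', h1]
      · have : ∀ v, θ u v = 0 := by
          intro v
          simp only [hθdef]
          simp [h1, h2]
        rw [Finset.sum_congr rfl fun v _ => this v]
        simp [h1, h2]

/-- adjacency pattern of the 3×3 grid -/
def a3 (z w : Fin 3 × Fin 3) : Bool :=
  ((z.1.val + 1 == w.1.val || w.1.val + 1 == z.1.val) && z.2 == w.2) ||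
  (z.1 == w.1 && (z.2.val + 1 == w.2.val || w.2.val + 1 == z.2.val))

lemma a3_symm : ∀ z w, a3 z w = a3 w z := by decide

theorem window_bound {V : Type*} [Fintype V] [DecidableEq V] (G : SimpleGraph V)
    (hG : G.Connected) (φ : Fin 3 × Fin 3 → V) (hinj : Function.Injective φ)
    (hadj : ∀ z w, G.Adj (φ z) (φ w) ↔ a3 z w = true)
    (p : Fin 3 × Fin 3 → ℚ) (x' y' : Fin 3 × Fin 3)
    (hdiv : ∀ z, (∑ w, if a3 z w then p z - p w else 0) =
      (if z = x' then (1:ℚ) else 0) - (if z = y' then 1 else 0)) :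
    effRes G (φ x') (φ y') ≤
      (1/2) * ∑ z, ∑ w, (if a3 z w then (p z : ℝ) - (p w : ℝ) else 0)^2 := by
  set W : Finset V := Finset.image φ Finset.univ with hWdef
  have hmem : ∀ z, φ z ∈ W := fun z => Finset.mem_image_of_mem φ (Finset.mem_univ z)
  set q : V → ℝ := fun u => ∑ z, if φ z = u then (p z : ℝ) else 0 with hqdef
  have hq : ∀ z, q (φ z) = (p z : ℝ) := by
    intro z
    simp only [hqdef]
    rw [Finset.sum_congr rfl fun z' (_ : z' ∈ Finset.univ) => by
      rw [show (if φ z' = φ z then (p z' : ℝ) else 0) = if z' = z then (p z' : ℝ) else 0 from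
        if_congr ⟨fun h => hinj h, fun h => by rw [h]⟩ rfl rfl]]
    simp [Finset.sum_ite_eq']
  set θ : V → V → ℝ := fun u v =>
    if G.Adj u v ∧ u ∈ W ∧ v ∈ W then q u - q v else 0 with hθdef
  have hθφ : ∀ z w, θ (φ z) (φ w) = ((if a3 z w then p z - p w else 0 : ℚ) : ℝ) := by
    intro z w
    by_cases ha : a3 z w
    · have hc : G.Adj (φ z) (φ w) ∧ φ z ∈ W ∧ φ w ∈ W :=
        ⟨(hadj z w).mpr ha, hmem z, hmem w⟩
      simp only [hθdef, if_pos hc, hq, ha, if_pos]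
      push_cast
      ring
    · have hc : ¬(G.Adj (φ z) (φ w) ∧ φ z ∈ W ∧ φ w ∈ W) := by
        rintro ⟨hA, -, -⟩
        exact ha ((hadj z w).mp hA)
      simp only [hθdef, if_neg hc, ha, if_neg]
      simp [ha]
  have hθ0 : ∀ u v, u ∉ W ∨ v ∉ W → θ u v = 0 := by
    intro u v h
    simp only [hθdef]
    rcases h with h | h <;> exact if_neg (by tauto)
  have hbound := flow_bound G hG (φ x') (φ y') θ ?_ ?_ ?_
  · refine le_trans hbound (le_of_eq ?_)
    congr 1
    -- reduce double sum over V to double sum over the window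
    have houter : ∀ u, u ∉ W → ∑ v, (θ u v)^2 = 0 := by
      intro u hu
      rw [Finset.sum_congr rfl fun v _ => by rw [hθ0 u v (Or.inl hu)]]
      simp
    rw [← Finset.sum_subset (Finset.subset_univ W) (fun u _ hu => houter u hu)]
    rw [Finset.sum_image (fun z _ z' _ h => hinj h)]
    refine Finset.sum_congr rfl fun z _ => ?_
    rw [← Finset.sum_subset (Finset.subset_univ W)
      (fun v _ hv => by rw [hθ0 (φ z) v (Or.inr hv)]; norm_num)]
    rw [Finset.sum_image (fun w _ w' _ h => hinj h)]
    refine Finset.sum_congr rfl fun w _ => ?_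
    rw [hθφ z w]
    by_cases ha : a3 z w <;> simp [ha]
  · intro u v
    simp only [hθdef]
    by_cases h : G.Adj u v ∧ u ∈ W ∧ v ∈ W
    · rw [if_pos h, if_pos ⟨h.1.symm, h.2.2, h.2.1⟩]
      ring
    · rw [if_neg h, if_neg (fun hc => h ⟨hc.1.symm, hc.2.2, hc.2.1⟩)]
      ring
  · intro u v hnadj
    exact if_neg (by tauto)
  · intro u
    by_cases hu : u ∈ W
    · obtain ⟨z0, -, rfl⟩ := Finset.mem_image.mp hu
      rw [← Finset.sum_subset (Finset.subset_univ W)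
        (fun v _ hv => hθ0 (φ z0) v (Or.inr hv))]
      rw [Finset.sum_image (fun w _ w' _ h => hinj h)]
      rw [Finset.sum_congr rfl fun w _ => hθφ z0 w]
      rw [← Rat.cast_sum]
      rw [hdiv z0]
      push_cast
      have e1 : (φ z0 = φ x') ↔ (z0 = x') := ⟨fun h => hinj h, fun h => by rw [h]⟩
      have e2 : (φ z0 = φ y') ↔ (z0 = y') := ⟨fun h => hinj h, fun h => by rw [h]⟩
      simp only [e1, e2, apply_ite (fun r : ℚ => (r : ℝ))]
      norm_num
    · rw [Finset.sum_congr rfl fun v _ => hθ0 u v (Or.inl hu)]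
      have hux : u ≠ φ x' := fun h => hu (h ▸ hmem x')
      have huy : u ≠ φ y' := fun h => hu (h ▸ hmem y')
      simp [hux, huy]

lemma grid_adj {m n : ℕ} (u v : Fin m × Fin n) :
    (grid m n).Adj u v ↔
      ((u.1.val + 1 = v.1.val ∨ v.1.val + 1 = u.1.val) ∧ u.2.val = v.2.val) ∨
      (u.1.val = v.1.val ∧ (u.2.val + 1 = v.2.val ∨ v.2.val + 1 = u.2.val)) := by
  simp [grid, SimpleGraph.boxProd_adj, SimpleGraph.pathGraph_adj, Fin.ext_iff]
  tauto

lemma grid_conn {m n : ℕ} (hm : 1 ≤ m) (hn : 1 ≤ n) : (grid m n).Connected := by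
  obtain ⟨a, rfl⟩ : ∃ a, m = a + 1 := ⟨m - 1, by omega⟩
  obtain ⟨b, rfl⟩ : ∃ b, n = b + 1 := ⟨n - 1, by omega⟩
  exact (SimpleGraph.connected_boxProd).mpr
    ⟨SimpleGraph.pathGraph_connected a, SimpleGraph.pathGraph_connected b⟩

def pUp : Fin 3 × Fin 3 → ℚ := fun z =>
  ![![3/8, 1/6, 1/8], ![7/12, 0, 1/12], ![3/8, 1/6, 1/8]] z.1 z.2

def pLeft : Fin 3 × Fin 3 → ℚ := fun z =>
  ![![0, 7/24, 3/8], ![17/24, 1/2, 11/24], ![5/8, 13/24, 1/2]] z.1 z.2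

def pRight : Fin 3 × Fin 3 → ℚ := fun z =>
  ![![5/8, 13/24, 1/2], ![17/24, 1/2, 11/24], ![0, 7/24, 3/8]] z.1 z.2

lemma hdivUp : ∀ z, (∑ w, if a3 z w then pUp z - pUp w else 0) =
    (if z = ((1:Fin 3),(0:Fin 3)) then (1:ℚ) else 0) -
    (if z = ((1:Fin 3),(1:Fin 3)) then 1 else 0) := by
  intro z
  fin_cases z <;>
    · simp only [Fintype.sum_prod_type, Fin.sum_univ_succ, Fin.sum_univ_zero, a3, pUp]
      norm_num [Prod.ext_iff, Fin.ext_iff, Matrix.cons_val_two, Matrix.vecHead, Matrix.vecTail]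

lemma hdivLeft : ∀ z, (∑ w, if a3 z w then pLeft z - pLeft w else 0) =
    (if z = ((1:Fin 3),(0:Fin 3)) then (1:ℚ) else 0) -
    (if z = ((0:Fin 3),(0:Fin 3)) then 1 else 0) := by
  intro z
  fin_cases z <;>
    · simp only [Fintype.sum_prod_type, Fin.sum_univ_succ, Fin.sum_univ_zero, a3, pLeft]
      norm_num [Prod.ext_iff, Fin.ext_iff, Matrix.cons_val_two, Matrix.vecHead, Matrix.vecTail]

lemma hdivRight : ∀ z, (∑ w, if a3 z w then pRight z - pRight w else 0) =
    (if z = ((1:Fin 3),(0:Fin 3)) then (1:ℚ) else 0) -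
    (if z = ((2:Fin 3),(0:Fin 3)) then 1 else 0) := by
  intro z
  fin_cases z <;>
    · simp only [Fintype.sum_prod_type, Fin.sum_univ_succ, Fin.sum_univ_zero, a3, pRight]
      norm_num [Prod.ext_iff, Fin.ext_iff, Matrix.cons_val_two, Matrix.vecHead, Matrix.vecTail]

lemma energyUp : (∑ z, ∑ w, (if a3 z w then pUp z - pUp w else 0)^2) = 7/6 := by
  simp only [Fintype.sum_prod_type, Fin.sum_univ_succ, Fin.sum_univ_zero, a3, pUp]
  norm_num [Fin.ext_iff, Matrix.cons_val_two, Matrix.vecHead, Matrix.vecTail]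

lemma energyLeft : (∑ z, ∑ w, (if a3 z w then pLeft z - pLeft w else 0)^2) = 17/12 := by
  simp only [Fintype.sum_prod_type, Fin.sum_univ_succ, Fin.sum_univ_zero, a3, pLeft]
  norm_num [Fin.ext_iff, Matrix.cons_val_two, Matrix.vecHead, Matrix.vecTail]

lemma energyRight : (∑ z, ∑ w, (if a3 z w then pRight z - pRight w else 0)^2) = 17/12 := by
  simp only [Fintype.sum_prod_type, Fin.sum_univ_succ, Fin.sum_univ_zero, a3, pRight]
  norm_num [Fin.ext_iff, Matrix.cons_val_two, Matrix.vecHead, Matrix.vecTail]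

lemma energy_cast (p : Fin 3 × Fin 3 → ℚ) :
    ∑ z, ∑ w, ((if a3 z w then (p z : ℝ) - (p w : ℝ) else 0))^2 =
    ((∑ z, ∑ w, (if a3 z w then p z - p w else 0)^2 : ℚ) : ℝ) := by
  rw [Rat.cast_sum]
  refine Finset.sum_congr rfl fun z _ => ?_
  rw [Rat.cast_sum]
  refine Finset.sum_congr rfl fun w _ => ?_
  rw [Rat.cast_pow]
  congr 1
  by_cases h : a3 z w <;> simp [h]

lemma window_sum_le_two {V : Type*} [Fintype V] [DecidableEq V] (G : SimpleGraph V)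
    (hG : G.Connected) (v : V) (φ : Fin 3 × Fin 3 → V) (hinj : Function.Injective φ)
    (hadj : ∀ z w, G.Adj (φ z) (φ w) ↔ a3 z w = true)
    (hx : φ ((1:Fin 3),(0:Fin 3)) = v)
    (hnbrs : ∀ y, G.Adj v y ↔
      y = φ ((0:Fin 3),(0:Fin 3)) ∨ y = φ ((2:Fin 3),(0:Fin 3)) ∨ y = φ ((1:Fin 3),(1:Fin 3))) :
    ∑ y, (if G.Adj v y then effRes G v y else 0) ≤ 2 := by
  have b1 : effRes G v (φ ((0:Fin 3),(0:Fin 3))) ≤ 17/24 := by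
    rw [← hx]
    refine le_trans (window_bound G hG φ hinj hadj pLeft _ _ hdivLeft) ?_
    rw [energy_cast, energyLeft]
    norm_num
  have b2 : effRes G v (φ ((2:Fin 3),(0:Fin 3))) ≤ 17/24 := by
    rw [← hx]
    refine le_trans (window_bound G hG φ hinj hadj pRight _ _ hdivRight) ?_
    rw [energy_cast, energyRight]
    norm_num
  have b3 : effRes G v (φ ((1:Fin 3),(1:Fin 3))) ≤ 7/12 := by
    rw [← hx]
    refine le_trans (window_bound G hG φ hinj hadj pUp _ _ hdivUp) ?_
    rw [energy_cast, energyUp]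
    norm_num
  set l := φ ((0:Fin 3),(0:Fin 3))
  set r := φ ((2:Fin 3),(0:Fin 3))
  set u := φ ((1:Fin 3),(1:Fin 3))
  have dlr : l ≠ r := fun h => by have := hinj h; simp [Prod.ext_iff, Fin.ext_iff] at this
  have dlu : l ≠ u := fun h => by have := hinj h; simp [Prod.ext_iff, Fin.ext_iff] at this
  have dru : r ≠ u := fun h => by have := hinj h; simp [Prod.ext_iff, Fin.ext_iff] at this
  have hsplit : ∀ y, (if G.Adj v y then effRes G v y else 0) =
      (if y = l then effRes G v l else 0) + (if y = r then effRes G v r else 0) +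
      (if y = u then effRes G v u else 0) := by
    intro y
    by_cases h1 : y = l
    · subst h1
      rw [if_pos ((hnbrs _).mpr (Or.inl rfl)), if_pos rfl, if_neg dlr, if_neg dlu]
      ring
    · by_cases h2 : y = r
      · subst h2
        rw [if_pos ((hnbrs _).mpr (Or.inr (Or.inl rfl))), if_neg h1, if_pos rfl, if_neg dru]
        ring
      · by_cases h3 : y = u
        · subst h3
          rw [if_pos ((hnbrs _).mpr (Or.inr (Or.inr rfl))), if_neg h1, if_neg h2, if_pos rfl]
          ring
        · rw [if_neg (fun hA => by rcases (hnbrs y).mp hA with h|h|h <;> simp_all),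
            if_neg h1, if_neg h2, if_neg h3]
          ring
  rw [Finset.sum_congr rfl fun y _ => hsplit y]
  rw [Finset.sum_add_distrib, Finset.sum_add_distrib]
  rw [Finset.sum_ite_eq' Finset.univ l, Finset.sum_ite_eq' Finset.univ r,
    Finset.sum_ite_eq' Finset.univ u]
  simp only [Finset.mem_univ, if_true]
  linarith

lemma corner_sum_le_two {V : Type*} [Fintype V] [DecidableEq V] (G : SimpleGraph V)
    (hG : G.Connected) (v w1 w2 : V) (hne : w1 ≠ w2)
    (hnbrs : ∀ y, G.Adj v y ↔ y = w1 ∨ y = w2) :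
    ∑ y, (if G.Adj v y then effRes G v y else 0) ≤ 2 := by
  have b1 : effRes G v w1 ≤ 1 := adj_effRes_le_one G hG ((hnbrs w1).mpr (Or.inl rfl))
  have b2 : effRes G v w2 ≤ 1 := adj_effRes_le_one G hG ((hnbrs w2).mpr (Or.inr rfl))
  have hsplit : ∀ y, (if G.Adj v y then effRes G v y else 0) =
      (if y = w1 then effRes G v w1 else 0) + (if y = w2 then effRes G v w2 else 0) := by
    intro y
    by_cases h1 : y = w1
    · subst h1
      rw [if_pos ((hnbrs _).mpr (Or.inl rfl)), if_pos rfl, if_neg hne]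
      ring
    · by_cases h2 : y = w2
      · subst h2
        rw [if_pos ((hnbrs _).mpr (Or.inr rfl)), if_neg h1, if_pos rfl]
        ring
      · rw [if_neg (fun hA => by rcases (hnbrs y).mp hA with h|h <;> simp_all),
          if_neg h1, if_neg h2]
        ring
  rw [Finset.sum_congr rfl fun y _ => hsplit y]
  rw [Finset.sum_add_distrib]
  rw [Finset.sum_ite_eq' Finset.univ w1, Finset.sum_ite_eq' Finset.univ w2]
  simp only [Finset.mem_univ, if_true]
  linarith

lemma side_bottom {m n : ℕ} (hm : 3 ≤ m) (hn : 3 ≤ n) (v : Fin m × Fin n)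
    (hj : v.2.val = 0) (hi1 : 1 ≤ v.1.val) (hi2 : v.1.val + 2 ≤ m) :
    ∑ y, (if (grid m n).Adj v y then effRes (grid m n) v y else 0) ≤ 2 := by
  set φ : Fin 3 × Fin 3 → Fin m × Fin n := fun z =>
    (⟨v.1.val - 1 + z.1.val, by have := z.1.isLt; omega⟩,
     ⟨z.2.val, by have := z.2.isLt; omega⟩) with hφ
  have e1 : ((1:Fin 3)).val = 1 := rfl
  have e0 : ((0:Fin 3)).val = 0 := rfl
  have e2 : ((2:Fin 3)).val = 2 := rfl
  refine window_sum_le_two (grid m n) (grid_conn (by omega) (by omega)) v φ ?_ ?_ ?_ ?_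
  · intro z w h
    have hz1 := z.1.isLt; have hz2 := z.2.isLt
    have hw1 := w.1.isLt; have hw2 := w.2.isLt
    simp only [hφ, Prod.ext_iff, Fin.ext_iff] at h ⊢
    omega
  · intro z w
    have hz1 := z.1.isLt; have hz2 := z.2.isLt
    have hw1 := w.1.isLt; have hw2 := w.2.isLt
    rw [grid_adj]
    simp only [hφ, a3, Bool.or_eq_true, Bool.and_eq_true, beq_iff_eq, Fin.ext_iff]
    omega
  · simp only [hφ, Prod.ext_iff, Fin.ext_iff, e1, e0]
    omega
  · intro y
    have hy1 := y.1.isLt; have hy2 := y.2.isLt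
    rw [grid_adj]
    simp only [hφ, Prod.ext_iff, Fin.ext_iff, e1, e0, e2]
    omega

lemma side_top {m n : ℕ} (hm : 3 ≤ m) (hn : 3 ≤ n) (v : Fin m × Fin n)
    (hj : v.2.val = n - 1) (hi1 : 1 ≤ v.1.val) (hi2 : v.1.val + 2 ≤ m) :
    ∑ y, (if (grid m n).Adj v y then effRes (grid m n) v y else 0) ≤ 2 := by
  set φ : Fin 3 × Fin 3 → Fin m × Fin n := fun z =>
    (⟨v.1.val - 1 + z.1.val, by have := z.1.isLt; omega⟩,
     ⟨n - 1 - z.2.val, by have := z.2.isLt; omega⟩) with hφ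
  have e1 : ((1:Fin 3)).val = 1 := rfl
  have e0 : ((0:Fin 3)).val = 0 := rfl
  have e2 : ((2:Fin 3)).val = 2 := rfl
  refine window_sum_le_two (grid m n) (grid_conn (by omega) (by omega)) v φ ?_ ?_ ?_ ?_
  · intro z w h
    have hz1 := z.1.isLt; have hz2 := z.2.isLt
    have hw1 := w.1.isLt; have hw2 := w.2.isLt
    simp only [hφ, Prod.ext_iff, Fin.ext_iff] at h ⊢
    omega
  · intro z w
    have hz1 := z.1.isLt; have hz2 := z.2.isLt
    have hw1 := w.1.isLt; have hw2 := w.2.isLt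
    rw [grid_adj]
    simp only [hφ, a3, Bool.or_eq_true, Bool.and_eq_true, beq_iff_eq, Fin.ext_iff]
    omega
  · simp only [hφ, Prod.ext_iff, Fin.ext_iff, e1, e0]
    omega
  · intro y
    have hy1 := y.1.isLt; have hy2 := y.2.isLt
    rw [grid_adj]
    simp only [hφ, Prod.ext_iff, Fin.ext_iff, e1, e0, e2]
    omega

lemma side_left {m n : ℕ} (hm : 3 ≤ m) (hn : 3 ≤ n) (v : Fin m × Fin n)
    (hj : v.1.val = 0) (hi1 : 1 ≤ v.2.val) (hi2 : v.2.val + 2 ≤ n) :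
    ∑ y, (if (grid m n).Adj v y then effRes (grid m n) v y else 0) ≤ 2 := by
  set φ : Fin 3 × Fin 3 → Fin m × Fin n := fun z =>
    (⟨z.2.val, by have := z.2.isLt; omega⟩,
     ⟨v.2.val - 1 + z.1.val, by have := z.1.isLt; omega⟩) with hφ
  have e1 : ((1:Fin 3)).val = 1 := rfl
  have e0 : ((0:Fin 3)).val = 0 := rfl
  have e2 : ((2:Fin 3)).val = 2 := rfl
  refine window_sum_le_two (grid m n) (grid_conn (by omega) (by omega)) v φ ?_ ?_ ?_ ?_
  · intro z w h
    have hz1 := z.1.isLt; have hz2 := z.2.isLt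
    have hw1 := w.1.isLt; have hw2 := w.2.isLt
    simp only [hφ, Prod.ext_iff, Fin.ext_iff] at h ⊢
    omega
  · intro z w
    have hz1 := z.1.isLt; have hz2 := z.2.isLt
    have hw1 := w.1.isLt; have hw2 := w.2.isLt
    rw [grid_adj]
    simp only [hφ, a3, Bool.or_eq_true, Bool.and_eq_true, beq_iff_eq, Fin.ext_iff]
    omega
  · simp only [hφ, Prod.ext_iff, Fin.ext_iff, e1, e0]
    omega
  · intro y
    have hy1 := y.1.isLt; have hy2 := y.2.isLt
    rw [grid_adj]
    simp only [hφ, Prod.ext_iff, Fin.ext_iff, e1, e0, e2]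
    omega

lemma side_right {m n : ℕ} (hm : 3 ≤ m) (hn : 3 ≤ n) (v : Fin m × Fin n)
    (hj : v.1.val = m - 1) (hi1 : 1 ≤ v.2.val) (hi2 : v.2.val + 2 ≤ n) :
    ∑ y, (if (grid m n).Adj v y then effRes (grid m n) v y else 0) ≤ 2 := by
  set φ : Fin 3 × Fin 3 → Fin m × Fin n := fun z =>
    (⟨m - 1 - z.2.val, by have := z.2.isLt; omega⟩,
     ⟨v.2.val - 1 + z.1.val, by have := z.1.isLt; omega⟩) with hφ
  have e1 : ((1:Fin 3)).val = 1 := rfl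
  have e0 : ((0:Fin 3)).val = 0 := rfl
  have e2 : ((2:Fin 3)).val = 2 := rfl
  refine window_sum_le_two (grid m n) (grid_conn (by omega) (by omega)) v φ ?_ ?_ ?_ ?_
  · intro z w h
    have hz1 := z.1.isLt; have hz2 := z.2.isLt
    have hw1 := w.1.isLt; have hw2 := w.2.isLt
    simp only [hφ, Prod.ext_iff, Fin.ext_iff] at h ⊢
    omega
  · intro z w
    have hz1 := z.1.isLt; have hz2 := z.2.isLt
    have hw1 := w.1.isLt; have hw2 := w.2.isLt
    rw [grid_adj]
    simp only [hφ, a3, Bool.or_eq_true, Bool.and_eq_true, beq_iff_eq, Fin.ext_iff]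
    omega
  · simp only [hφ, Prod.ext_iff, Fin.ext_iff, e1, e0]
    omega
  · intro y
    have hy1 := y.1.isLt; have hy2 := y.2.isLt
    rw [grid_adj]
    simp only [hφ, Prod.ext_iff, Fin.ext_iff, e1, e0, e2]
    omega

lemma grid_sum_le_two {m n : ℕ} (hm : 3 ≤ m) (hn : 3 ≤ n) (v : Fin m × Fin n)
    (hb : v.1.val = 0 ∨ v.1.val = m - 1 ∨ v.2.val = 0 ∨ v.2.val = n - 1) :
    ∑ y, (if (grid m n).Adj v y then effRes (grid m n) v y else 0) ≤ 2 := by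
  have hG : (grid m n).Connected := grid_conn (by omega) (by omega)
  have hv1 := v.1.isLt; have hv2 := v.2.isLt
  by_cases hc : (v.1.val = 0 ∨ v.1.val = m - 1) ∧ (v.2.val = 0 ∨ v.2.val = n - 1)
  · -- corner cases
    obtain ⟨h1, h2⟩ := hc
    rcases h1 with h1 | h1 <;> rcases h2 with h2 | h2
    · exact corner_sum_le_two _ hG v (⟨1, by omega⟩, ⟨0, by omega⟩) (⟨0, by omega⟩, ⟨1, by omega⟩)
        (by simp [Prod.ext_iff, Fin.ext_iff] <;> omega)
        (by intro y; have := y.1.isLt; have := y.2.isLt; rw [grid_adj]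
            simp only [Prod.ext_iff, Fin.ext_iff]; omega)
    · exact corner_sum_le_two _ hG v (⟨1, by omega⟩, ⟨n-1, by omega⟩) (⟨0, by omega⟩, ⟨n-2, by omega⟩)
        (by simp [Prod.ext_iff, Fin.ext_iff] <;> omega)
        (by intro y; have := y.1.isLt; have := y.2.isLt; rw [grid_adj]
            simp only [Prod.ext_iff, Fin.ext_iff]; omega)
    · exact corner_sum_le_two _ hG v (⟨m-2, by omega⟩, ⟨0, by omega⟩) (⟨m-1, by omega⟩, ⟨1, by omega⟩)
        (by simp [Prod.ext_iff, Fin.ext_iff] <;> omega)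
        (by intro y; have := y.1.isLt; have := y.2.isLt; rw [grid_adj]
            simp only [Prod.ext_iff, Fin.ext_iff]; omega)
    · exact corner_sum_le_two _ hG v (⟨m-2, by omega⟩, ⟨n-1, by omega⟩) (⟨m-1, by omega⟩, ⟨n-2, by omega⟩)
        (by simp [Prod.ext_iff, Fin.ext_iff] <;> omega)
        (by intro y; have := y.1.isLt; have := y.2.isLt; rw [grid_adj]
            simp only [Prod.ext_iff, Fin.ext_iff]; omega)
  · -- side cases
    rcases hb with h | h | h | h
    · exact side_left hm hn v h (by omega) (by omega)
    · exact side_right hm hn v h (by omega) (by omega)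
    · exact side_bottom hm hn v h (by omega) (by omega)
    · exact side_top hm hn v h (by omega) (by omega)

end AUX

theorem grid_boundary_curv_nonneg (m n : ℕ) (hm : 3 ≤ m) (hn : 3 ≤ n)
    (v : Fin m × Fin n)
    (hb : v.1.val = 0 ∨ v.1.val = m - 1 ∨ v.2.val = 0 ∨ v.2.val = n - 1) :
    0 ≤ curv (grid m n) v := by
  have key := grid_sum_le_two hm hn v hb
  simp only [curv]
  linarith
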